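/- A finite undirected graph G = (V, E) admits an orientation in which every vertex has in-degree at most 1 if and only if every connected component of G contains at most one cycle (i.e., each component has at most as many edges as vertices). -/

import Mathlib

open Finset SimpleGraph

private lemma stmt17_step {V : Type*} (G : SimpleGraph V) {u w0 : V}
    (hr : G.Reachable u w0) (hne : u ≠ w0) :
    ∃ x, G.Adj u x ∧ G.dist x w0 < G.dist u w0 := by
  obtain ⟨p, hp⟩ := hr.exists_walk_length_eq_dist
  cases p with
  | nil => exact absurd rfl hne
  | @cons _ x _ h q =>
    refine ⟨x, h, ?_⟩
    have hq := G.dist_le q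
    simp only [SimpleGraph.Walk.length_cons] at hp
    omega

private lemma stmt17_reach {V : Type*} (G : SimpleGraph V) {e : Sym2 V}
    (he : e ∈ G.edgeSet) {u w : V} (hu : u ∈ e) (hw : w ∈ e) : G.Reachable u w := by
  induction e with
  | _ a b =>
    rw [SimpleGraph.mem_edgeSet] at he
    rw [Sym2.mem_iff] at hu hw
    rcases hu with rfl | rfl <;> rcases hw with rfl | rfl
    · exact .refl _
    · exact he.reachable
    · exact he.symm.reachable
    · exact .refl _

open Classical in
private lemma stmt17_aux {V : Type*} [Fintype V] [DecidableEq V]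
    (G : SimpleGraph V) [DecidableRel G.Adj] {v : V}
    (h : (G.edgeFinset.filter (fun e => ∀ u ∈ e, G.Reachable u v)).card ≤
        (Finset.univ.filter (fun u : V => G.Reachable u v)).card)
    {W : Finset V} (hWne : W.Nonempty) (hW : ∀ u ∈ W, G.Reachable u v) :
    (G.edgeFinset.filter (fun e => ∀ u ∈ e, u ∈ W)).card ≤ W.card := by
  classical
  obtain ⟨w0, hw0⟩ := hWne
  set Cv := Finset.univ.filter (fun u : V => G.Reachable u v) with hCv
  set Ev := G.edgeFinset.filter (fun e => ∀ u ∈ e, G.Reachable u v) with hEv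
  set EW := G.edgeFinset.filter (fun e => ∀ u ∈ e, u ∈ W) with hEW
  have hWCv : W ⊆ Cv := fun u hu => mem_filter.mpr ⟨mem_univ _, hW u hu⟩
  have hEWEv : EW ⊆ Ev := by
    intro e he
    rw [hEW, mem_filter] at he
    exact mem_filter.mpr ⟨he.1, fun u hu => hW u (he.2 u hu)⟩
  have hreach : ∀ u ∈ Cv, G.Reachable u w0 := fun u hu =>
    ((mem_filter.mp hu).2).trans (hW w0 hw0).symm
  have hx : ∀ u ∈ Cv \ W, ∃ x, G.Adj u x ∧ G.dist x w0 < G.dist u w0 := by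
    intro u hu
    rw [mem_sdiff] at hu
    exact stmt17_step G (hreach u hu.1) (fun hh => hu.2 (hh ▸ hw0))
  choose! next h1 h2 using hx
  have key : (Cv \ W).card ≤ (Ev \ EW).card := by
    apply Finset.card_le_card_of_injOn (fun u => s(u, next u))
    · intro u hu
      have hu' := mem_sdiff.mp hu
      have huC := (mem_filter.mp hu'.1).2
      rw [Finset.mem_coe, mem_sdiff]
      constructor
      · rw [hEv, mem_filter]
        refine ⟨SimpleGraph.mem_edgeFinset.mpr (h1 u hu), ?_⟩
        intro z hz
        rw [Sym2.mem_iff] at hz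
        rcases hz with rfl | rfl
        · exact huC
        · exact ((h1 u hu).reachable.symm).trans huC
      · rw [hEW, mem_filter]
        rintro ⟨-, hall⟩
        exact hu'.2 (hall u (Sym2.mem_mk_left _ _))
    · intro u1 hu1 u2 hu2 heq
      simp only [Sym2.eq_iff] at heq
      rcases heq with ⟨rfl, -⟩ | ⟨h12, h21⟩
      · rfl
      · have d1 := h2 u1 hu1
        have d2 := h2 u2 hu2
        rw [h21] at d1
        rw [← h12] at d2
        omega
  have e1 : (Ev \ EW).card = Ev.card - EW.card := card_sdiff_of_subset hEWEv
  have e2 : (Cv \ W).card = Cv.card - W.card := card_sdiff_of_subset hWCv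
  have l1 : EW.card ≤ Ev.card := card_le_card hEWEv
  have l2 : W.card ≤ Cv.card := card_le_card hWCv
  omega

open Classical in
private lemma stmt17_hall {V : Type*} [Fintype V] [DecidableEq V]
    (G : SimpleGraph V) [DecidableRel G.Adj]
    (h : ∀ v : V,
      (G.edgeFinset.filter (fun e => ∀ u ∈ e, G.Reachable u v)).card ≤
        (Finset.univ.filter (fun u : V => G.Reachable u v)).card)
    (s : Finset {e : Sym2 V // e ∈ G.edgeFinset}) :
    s.card ≤ (s.biUnion (fun e => Finset.univ.filter (· ∈ e.1))).card := by
  classical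
  set t : {e : Sym2 V // e ∈ G.edgeFinset} → Finset V :=
    fun e => Finset.univ.filter (· ∈ e.1) with ht
  set Wb := s.biUnion t with hWb
  set c : {e : Sym2 V // e ∈ G.edgeFinset} → G.ConnectedComponent :=
    fun e => G.connectedComponentMk e.1.out.1 with hc
  rw [Finset.card_eq_sum_card_fiberwise (f := c) (t := Finset.univ) (fun x _ => mem_univ _),
    Finset.card_eq_sum_card_fiberwise (f := G.connectedComponentMk) (t := Finset.univ)
      (s := Wb) (fun x _ => mem_univ _)]
  apply Finset.sum_le_sum
  intro comp _
  by_cases hne : (s.filter (fun e => c e = comp)).Nonempty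
  · obtain ⟨e0, he0⟩ := hne
    have he0' := mem_filter.mp he0
    set v := e0.1.out.1 with hv
    have hcomp : comp = G.connectedComponentMk v := he0'.2.symm
    set W' := Wb.filter (fun u => G.connectedComponentMk u = comp) with hW'
    have hW'reach : ∀ u ∈ W', G.Reachable u v := by
      intro u hu
      have := (mem_filter.mp hu).2
      rw [hcomp] at this
      exact SimpleGraph.ConnectedComponent.eq.mp this
    have hvW' : v ∈ W' := by
      rw [hW', mem_filter]
      refine ⟨?_, hcomp.symm⟩
      rw [hWb, mem_biUnion]
      exact ⟨e0, he0'.1, mem_filter.mpr ⟨mem_univ _, Sym2.out_fst_mem _⟩⟩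
    calc (s.filter (fun e => c e = comp)).card
        ≤ (G.edgeFinset.filter (fun e => ∀ u ∈ e, u ∈ W')).card := by
          apply Finset.card_le_card_of_injOn (fun e => e.1)
          · intro e he
            have he' := mem_filter.mp he
            rw [Finset.mem_coe, mem_filter]
            refine ⟨e.2, ?_⟩
            intro z hz
            rw [hW', mem_filter]
            constructor
            · rw [hWb, mem_biUnion]
              exact ⟨e, he'.1, mem_filter.mpr ⟨mem_univ _, hz⟩⟩
            · have hr : G.Reachable z e.1.out.1 :=
                stmt17_reach G (SimpleGraph.mem_edgeFinset.mp e.2) hz (Sym2.out_fst_mem _)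
              calc G.connectedComponentMk z = G.connectedComponentMk e.1.out.1 :=
                    SimpleGraph.ConnectedComponent.eq.mpr hr
                _ = comp := he'.2
          · exact fun a _ b _ hab => Subtype.ext hab
      _ ≤ W'.card := stmt17_aux G (h v) ⟨v, hvW'⟩ hW'reach
  · rw [Finset.not_nonempty_iff_eq_empty.mp hne]
    simp

open Classical in
/-- A finite graph admits an orientation with all in-degrees at most 1 iff it is a
pseudoforest, i.e., every connected component has at most as many edges as vertices. -/
theorem stmt17 {V : Type*} [Fintype V] [DecidableEq V]
    (G : SimpleGraph V) [DecidableRel G.Adj] :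
    (∃ d : Sym2 V → V,
      (∀ e ∈ G.edgeFinset, d e ∈ e) ∧
      (∀ v : V, (G.edgeFinset.filter (fun e => d e = v)).card ≤ 1)) ↔
    (∀ v : V,
      (G.edgeFinset.filter (fun e => ∀ u ∈ e, G.Reachable u v)).card ≤
        (Finset.univ.filter (fun u : V => G.Reachable u v)).card) := by
  constructor
  · rintro ⟨d, hd1, hd2⟩ v
    apply Finset.card_le_card_of_injOn d
    · intro e he
      have he' := Finset.mem_filter.mp he
      exact Finset.mem_filter.mpr ⟨Finset.mem_univ _, he'.2 (d e) (hd1 e he'.1)⟩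
    · intro e1 he1 e2 he2 heq
      have h1 : e1 ∈ G.edgeFinset.filter (fun e => d e = d e1) :=
        Finset.mem_filter.mpr ⟨(Finset.mem_filter.mp he1).1, rfl⟩
      have h2' : e2 ∈ G.edgeFinset.filter (fun e => d e = d e1) :=
        Finset.mem_filter.mpr ⟨(Finset.mem_filter.mp he2).1, heq.symm⟩
      exact Finset.card_le_one.mp (hd2 (d e1)) _ h1 _ h2'
  · intro h
    obtain ⟨f, hfinj, hft⟩ :=
      (Finset.all_card_le_biUnion_card_iff_exists_injective
        (fun e : {e : Sym2 V // e ∈ G.edgeFinset} => Finset.univ.filter (· ∈ e.1))).mp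
        (stmt17_hall G h)
    refine ⟨fun e => if he : e ∈ G.edgeFinset then f ⟨e, he⟩ else e.out.1, ?_, ?_⟩
    · intro e he
      simp only [dif_pos he]
      exact (Finset.mem_filter.mp (hft ⟨e, he⟩)).2
    · intro w
      rw [Finset.card_le_one]
      intro a ha b hb
      have ha' := Finset.mem_filter.mp ha
      have hb' := Finset.mem_filter.mp hb
      have ha2 : (if he : a ∈ G.edgeFinset then f ⟨a, he⟩ else a.out.1) = w := ha'.2
      have hb2 : (if he : b ∈ G.edgeFinset then f ⟨b, he⟩ else b.out.1) = w := hb'.2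
      rw [dif_pos ha'.1] at ha2
      rw [dif_pos hb'.1] at hb2
      have : (⟨a, ha'.1⟩ : {e : Sym2 V // e ∈ G.edgeFinset}) = ⟨b, hb'.1⟩ :=
        hfinj (ha2.trans hb2.symm)
      exact congrArg Subtype.val this
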